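/- For every nonzero s ∈ ℤ^N: (1) λ(j·s, j·s) = λ(s, s) for every j ∈ ℤ \ {0}; (2) λ(j·s, p·s) = λ(s, s) for all j, p ∈ ℤ \ {0} with j + p ≠ 0. -/

import Mathlib

/-- The "bar" involution on `ℤ^{2m}`:
`bar r = (r_{m+1}, …, r_{2m}, -r_1, …, -r_m)`. -/
def bar (m : ℕ) (r : Fin (2*m) → ℤ) : Fin (2*m) → ℤ := fun i =>
  if h : (i : ℕ) < m then r ⟨(i : ℕ) + m, by omega⟩
  else - r ⟨(i : ℕ) - m, by have := i.isLt; omega⟩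

/-- Equation (9.3): for all nonzero `l, r, s ∈ ℤ^{2m}`,
`⟨l̄,s⟩·λ(r,s+l) + ⟨l̄,r⟩·λ(s,r+l) − ⟨l̄,r+s⟩·λ(r,s) = 0`. -/
def Eq93 (m : ℕ) (lam : (Fin (2*m) → ℤ) → (Fin (2*m) → ℤ) → ℂ) : Prop :=
  ∀ l r s : Fin (2*m) → ℤ, l ≠ 0 → r ≠ 0 → s ≠ 0 →
    ((∑ i, bar m l i * s i : ℤ) : ℂ) * lam r (s + l)
      + ((∑ i, bar m l i * r i : ℤ) : ℂ) * lam s (r + l)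
      - ((∑ i, bar m l i * (r + s) i : ℤ) : ℂ) * lam r s = 0

namespace Stmt14

def B (m : ℕ) (u v : Fin (2*m) → ℤ) : ℤ := ∑ i, bar m u i * v i

def i1 (m : ℕ) (a : Fin m) : Fin (2*m) := ⟨a, by have := a.isLt; omega⟩
def i2 (m : ℕ) (a : Fin m) : Fin (2*m) := ⟨(a:ℕ) + m, by have := a.isLt; omega⟩

variable {m : ℕ}

lemma bar_i1 (u : Fin (2*m) → ℤ) (a : Fin m) : bar m u (i1 m a) = u (i2 m a) := by
  simp only [bar, i1, i2]
  exact dif_pos a.isLt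

lemma bar_i2 (u : Fin (2*m) → ℤ) (a : Fin m) : bar m u (i2 m a) = - u (i1 m a) := by
  simp only [bar, i1, i2]
  refine (dif_neg (show ¬ ((a:ℕ) + m < m) by omega)).trans ?_
  simp only [Nat.add_sub_cancel]

lemma B_eq (u v : Fin (2*m) → ℤ) :
    B m u v = ∑ a : Fin m, (u (i2 m a) * v (i1 m a) - u (i1 m a) * v (i2 m a)) := by
  unfold B
  rw [← Equiv.sum_comp (finCongr (Nat.two_mul m).symm) (fun i => bar m u i * v i)]
  rw [Fin.sum_univ_add, ← Finset.sum_add_distrib]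
  apply Finset.sum_congr rfl
  intro a _
  have h1 : (finCongr (Nat.two_mul m).symm) (Fin.castAdd m a) = i1 m a := by
    apply Fin.ext; simp [i1]
  have h2 : (finCongr (Nat.two_mul m).symm) (Fin.natAdd m a) = i2 m a := by
    apply Fin.ext; simp [i2, Nat.add_comm]
  simp only [h1, h2, bar_i1, bar_i2]
  try ring

lemma B_antisymm (u v : Fin (2*m) → ℤ) : B m u v = - B m v u := by
  rw [B_eq, B_eq, ← Finset.sum_neg_distrib]
  apply Finset.sum_congr rfl
  intro a _
  ring

lemma B_self (u : Fin (2*m) → ℤ) : B m u u = 0 := by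
  have := B_antisymm u u; omega

lemma B_add_right (u v w : Fin (2*m) → ℤ) : B m u (v + w) = B m u v + B m u w := by
  simp [B, Pi.add_apply, mul_add, Finset.sum_add_distrib]

lemma B_smul_right (u : Fin (2*m) → ℤ) (q : ℤ) (v : Fin (2*m) → ℤ) :
    B m u (q • v) = q * B m u v := by
  simp [B, Pi.smul_apply, smul_eq_mul, Finset.mul_sum]
  apply Finset.sum_congr rfl
  intro a _
  ring

lemma B_neg_right (u v : Fin (2*m) → ℤ) : B m u (-v) = - B m u v := by
  have := B_smul_right u (-1) v
  simpa using this

lemma B_sub_right (u v w : Fin (2*m) → ℤ) : B m u (v - w) = B m u v - B m u w := by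
  rw [sub_eq_add_neg, B_add_right, B_neg_right]; ring

lemma B_smul_left (u : Fin (2*m) → ℤ) (q : ℤ) (v : Fin (2*m) → ℤ) :
    B m (q • u) v = q * B m u v := by
  rw [B_antisymm, B_smul_right, B_antisymm u v]; ring

lemma B_neg_left (u v : Fin (2*m) → ℤ) : B m (-u) v = - B m u v := by
  have := B_smul_left u (-1) v
  simpa using this

lemma B_zero_right (u : Fin (2*m) → ℤ) : B m u 0 = 0 := by
  simp [B]

lemma B_zero_left (v : Fin (2*m) → ℤ) : B m 0 v = 0 := by
  rw [B_antisymm, B_zero_right]; ring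

lemma ne_zero_of_B_right {u v : Fin (2*m) → ℤ} (h : B m u v ≠ 0) : v ≠ 0 := by
  rintro rfl; exact h (B_zero_right u)

lemma ne_zero_of_B_left {u v : Fin (2*m) → ℤ} (h : B m u v ≠ 0) : u ≠ 0 := by
  rintro rfl; exact h (B_zero_left v)

lemma exists_B_ne_zero {s : Fin (2*m) → ℤ} (hs : s ≠ 0) :
    ∃ l : Fin (2*m) → ℤ, B m l s ≠ 0 := by
  obtain ⟨j, hj⟩ := Function.ne_iff.mp hs
  simp only [Pi.zero_apply] at hj
  -- find i0 with bar m s i0 ≠ 0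
  have : ∃ i0 : Fin (2*m), bar m s i0 ≠ 0 := by
    rcases lt_or_ge (j : ℕ) m with h | h
    · refine ⟨i2 m ⟨j, h⟩, ?_⟩
      rw [bar_i2]
      have : i1 m ⟨(j:ℕ), h⟩ = j := by apply Fin.ext; simp [i1]
      rw [this]; simpa using hj
    · refine ⟨i1 m ⟨(j:ℕ) - m, by have := j.isLt; omega⟩, ?_⟩
      rw [bar_i1]
      have : i2 m ⟨(j:ℕ) - m, by have := j.isLt; omega⟩ = j := by
        apply Fin.ext; simp [i2]; omega
      rw [this]; exact hj
  obtain ⟨i0, hi0⟩ := this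
  refine ⟨Pi.single i0 1, ?_⟩
  rw [B_antisymm]
  simp [B, Pi.single_apply]
  exact hi0


variable {lam : (Fin (2*m) → ℤ) → (Fin (2*m) → ℤ) → ℂ}

lemma h93B (h93 : _root_.Eq93 m lam) :
    ∀ l r s : Fin (2*m) → ℤ, l ≠ 0 → r ≠ 0 → s ≠ 0 →
    ((B m l s : ℤ) : ℂ) * lam r (s + l)
      + ((B m l r : ℤ) : ℂ) * lam s (r + l)
      - ((B m l (r + s) : ℤ) : ℂ) * lam r s = 0 := h93

lemma lemA (h93 : _root_.Eq93 m lam)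
    (u t : Fin (2*m) → ℤ) (hu : u ≠ 0) (p q : ℤ) (hp : p ≠ 0) (hq : q ≠ 0)
    (ht : B m u t ≠ 0) : lam (p • u) (t + q • u) = lam t (p • u) := by
  have ht0 : t ≠ 0 := ne_zero_of_B_right ht
  have hpu : p • u ≠ 0 := smul_ne_zero hp hu
  have hqu : q • u ≠ 0 := smul_ne_zero hq hu
  have E := h93B h93 (q • u) t (p • u) hqu ht0 hpu
  simp only [B_smul_left, B_smul_right, B_add_right, B_self] at E
  have hq' : (q : ℂ) ≠ 0 := Int.cast_ne_zero.mpr hq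
  have hBt : ((B m u t : ℤ) : ℂ) ≠ 0 := Int.cast_ne_zero.mpr ht
  push_cast at E
  apply mul_left_cancel₀ (mul_ne_zero hq' hBt)
  linear_combination E


lemma vec_shift (s l : Fin (2*m) → ℤ) (b q : ℤ) :
    (b • s + l) + q • s = (b + q) • s + l := by
  ext i; simp only [Pi.add_apply, Pi.smul_apply, smul_eq_mul]; ring

lemma vec_shift' (s l : Fin (2*m) → ℤ) (a q : ℤ) :
    (a • s - l) + q • s = (a + q) • s - l := by
  ext i; simp only [Pi.add_apply, Pi.sub_apply, Pi.smul_apply, smul_eq_mul]; ring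

lemma lemPhi (hsymm : ∀ r s, lam r s = lam s r) (h93 : _root_.Eq93 m lam)
    (s l : Fin (2*m) → ℤ) (hs : s ≠ 0) (hd : B m l s ≠ 0) :
    ∀ a b : ℤ, a + b ≠ 0 → lam (a • s - l) (b • s + l) = lam l ((a + b) • s) := by
  have hl : l ≠ 0 := ne_zero_of_B_left hd
  have hsl : B m s l ≠ 0 := by rw [B_antisymm]; simpa using hd
  have hne1 : ∀ a : ℤ, a • s - l ≠ 0 := by
    intro a
    apply ne_zero_of_B_right (u := s)
    rw [B_sub_right, B_smul_right, B_self]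
    simpa using hsl
  have hne2 : ∀ b : ℤ, b • s + l ≠ 0 := by
    intro b
    apply ne_zero_of_B_right (u := s)
    rw [B_add_right, B_smul_right, B_self]
    simpa using hsl
  have key0 : ∀ k : ℤ, k ≠ 0 → lam (k • s - l) l = lam l (k • s) := by
    intro k hk
    have hB : B m l (k • s) ≠ 0 := by
      rw [B_smul_right]; exact mul_ne_zero hk hd
    have h2 := lemA h93 l (k • s) hl 1 (-1) one_ne_zero (by norm_num) hB
    rw [one_smul, neg_smul, one_smul, ← sub_eq_add_neg] at h2
    rw [hsymm, h2, hsymm]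
  have hF : ∀ a b q : ℤ, q ≠ 0 →
      lam (a • s - l) ((b + q) • s + l) = lam ((a + q) • s - l) (b • s + l) := by
    intro a b q hq
    have hqs : q • s ≠ 0 := smul_ne_zero hq hs
    have E := h93B h93 (q • s) (a • s - l) (b • s + l) hqs (hne1 a) (hne2 b)
    simp only [B_smul_left, B_add_right, B_sub_right, B_smul_right, B_self] at E
    rw [vec_shift, vec_shift'] at E
    have hq' : (q : ℂ) ≠ 0 := Int.cast_ne_zero.mpr hq
    have hBt : ((B m s l : ℤ) : ℂ) ≠ 0 := Int.cast_ne_zero.mpr hsl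
    push_cast at E
    rw [hsymm (b • s + l) ((a + q) • s - l)] at E
    apply mul_left_cancel₀ (mul_ne_zero hq' hBt)
    linear_combination E
  intro a b hab
  rcases eq_or_ne b 0 with rfl | hb
  · rw [add_zero] at hab ⊢
    simpa using key0 a hab
  · have h3 := hF a 0 b hb
    rw [zero_add] at h3
    rw [h3, show (0:ℤ) • s + l = l by simp]
    exact key0 (a + b) hab

lemma lemStar (hsymm : ∀ r s, lam r s = lam s r) (h93 : _root_.Eq93 m lam)
    (s l : Fin (2*m) → ℤ) (hs : s ≠ 0) (hd : B m l s ≠ 0)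
    (j p : ℤ) (hj : j ≠ 0) (hp : p ≠ 0) :
    ((j : ℂ) + p) * lam (j • s) (p • s) = p * lam l (j • s) + j * lam l (p • s) := by
  have hl : l ≠ 0 := ne_zero_of_B_left hd
  have hsl : B m s l ≠ 0 := by rw [B_antisymm]; simpa using hd
  have hjs : j • s ≠ 0 := smul_ne_zero hj hs
  have hps : p • s ≠ 0 := smul_ne_zero hp hs
  have E := h93B h93 l (j • s) (p • s) hl hjs hps
  simp only [B_add_right, B_smul_right] at E
  rw [show p • s + l = l + p • s from add_comm _ _,
    show j • s + l = l + j • s from add_comm _ _] at E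
  rw [lemA h93 s l hs j p hj hp hsl, lemA h93 s l hs p j hp hj hsl] at E
  have hd' : ((B m l s : ℤ) : ℂ) ≠ 0 := Int.cast_ne_zero.mpr hd
  push_cast at E
  apply mul_left_cancel₀ hd'
  linear_combination -E

lemma lemII (hsymm : ∀ r s, lam r s = lam s r) (h93 : _root_.Eq93 m lam)
    (s l : Fin (2*m) → ℤ) (hs : s ≠ 0) (hd : B m l s ≠ 0)
    (j p : ℤ) (hj : j ≠ 0) (hp : p ≠ 0) (hjp : j + p ≠ 0) :
    (j : ℂ) * lam l (j • s) + p * lam l (p • s)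
      = ((j : ℂ) + p) * lam l ((j + p) • s) := by
  have hl : l ≠ 0 := ne_zero_of_B_left hd
  have hsl : B m s l ≠ 0 := by rw [B_antisymm]; simpa using hd
  have hjs : j • s ≠ 0 := smul_ne_zero hj hs
  have hps : p • s ≠ 0 := smul_ne_zero hp hs
  have hnl : (-l) ≠ 0 := neg_ne_zero.mpr hl
  have hne2 : ∀ b : ℤ, b • s + l ≠ 0 := by
    intro b
    apply ne_zero_of_B_right (u := s)
    rw [B_add_right, B_smul_right, B_self]
    simpa using hsl
  -- (***) for (j,p) and (p,j)
  have star : ∀ a b : ℤ, a ≠ 0 → b ≠ 0 → a + b ≠ 0 →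
      ((a : ℂ) + b) * lam l (a • s)
        = b * lam (a • s) (b • s) + a * lam l ((a + b) • s) := by
    intro a b ha hb hab
    have has : a • s ≠ 0 := smul_ne_zero ha hs
    have E := h93B h93 (-l) (a • s) (b • s + l) hnl has (hne2 b)
    simp only [B_neg_left, B_add_right, B_smul_right, B_self] at E
    rw [show (b • s + l) + -l = b • s by ext i; simp,
      show a • s + -l = a • s - l from (sub_eq_add_neg _ _).symm] at E
    rw [hsymm (b • s + l) (a • s - l)] at E
    rw [lemPhi hsymm h93 s l hs hd a b hab] at E
    rw [show b • s + l = l + b • s from add_comm _ _,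
      lemA h93 s l hs a b ha hb hsl] at E
    have hd' : ((B m l s : ℤ) : ℂ) ≠ 0 := Int.cast_ne_zero.mpr hd
    push_cast at E
    apply mul_left_cancel₀ hd'
    linear_combination E
  have e1 := star j p hj hp hjp
  have e2 := star p j hp hj (by omega)
  have e3 := lemStar hsymm h93 s l hs hd j p hj hp
  rw [hsymm (p • s) (j • s), add_comm p j] at e2
  linear_combination e1 + e2 + e3

end Stmt14

open Stmt14

/-- For every nonzero `s ∈ ℤ^{2m}`:
(1) `λ(j·s, j·s) = λ(s,s)` for all `j ∈ ℤ \ {0}`;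
(2) `λ(j·s, p·s) = λ(s,s)` for all `j, p ∈ ℤ \ {0}` with `j + p ≠ 0`. -/
theorem stmt14 (m : ℕ) (hm : 1 ≤ m)
    (lam : (Fin (2*m) → ℤ) → (Fin (2*m) → ℤ) → ℂ)
    (hsymm : ∀ r s, lam r s = lam s r)
    (h93 : Eq93 m lam)
    (s : Fin (2*m) → ℤ) (hs : s ≠ 0) :
    (∀ j : ℤ, j ≠ 0 → lam (j • s) (j • s) = lam s s) ∧
    (∀ j p : ℤ, j ≠ 0 → p ≠ 0 → j + p ≠ 0 → lam (j • s) (p • s) = lam s s) := by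
  obtain ⟨l, hd⟩ := exists_B_ne_zero hs
  have II := lemII (lam := lam) hsymm h93 s l hs hd
  have hcast : ∀ k : ℤ, k ≠ 0 → ((k : ℂ)) ≠ 0 := fun k hk => Int.cast_ne_zero.mpr hk
  -- doubling
  have hdouble : ∀ k : ℤ, k ≠ 0 → lam l ((k + k) • s) = lam l (k • s) := by
    intro k hk
    have h2 := II k k hk hk (by omega)
    have hkk : ((k : ℂ) + k) ≠ 0 := by
      have := hcast (k + k) (by omega); push_cast at this; exact this
    apply mul_left_cancel₀ hkk
    linear_combination -h2
  -- C(-1) = C 1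
  have neg1 : lam l ((-1 : ℤ) • s) = lam l ((1 : ℤ) • s) := by
    have h1 := II 1 (-2) one_ne_zero (by norm_num) (by norm_num)
    rw [show (1 : ℤ) + -2 = -1 by norm_num] at h1
    have hm2 := hdouble (-1) (by norm_num)
    rw [show (-1 : ℤ) + -1 = -2 by norm_num] at hm2
    push_cast at h1
    linear_combination -h1 - 2 * hm2
  -- all C k equal to C 1
  have key : ∀ n : ℕ, ∀ k : ℤ, k ≠ 0 → k.natAbs ≤ n + 1 →
      lam l (k • s) = lam l ((1 : ℤ) • s) := by
    intro n
    induction n with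
    | zero =>
      intro k hk hkn
      have : k = 1 ∨ k = -1 := by omega
      rcases this with rfl | rfl
      · rfl
      · exact neg1
    | succ n ih =>
      intro k hk hkn
      rcases le_or_gt k.natAbs (n + 1) with h | h
      · exact ih k hk h
      · rcases lt_or_ge k 0 with hneg | hpos
        · -- k ≤ -2
          have hk2 : k ≤ -2 := by omega
          have h1 := II (k + 1) (-1) (by omega) (by norm_num) (by omega)
          rw [show k + 1 + -1 = k by ring] at h1
          rw [ih (k + 1) (by omega) (by omega), neg1] at h1
          apply mul_left_cancel₀ (hcast k hk)
          push_cast at h1 ⊢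
          linear_combination -h1
        · -- k ≥ 2
          have hk2 : 2 ≤ k := by omega
          have h1 := II (k - 1) 1 (by omega) one_ne_zero (by omega)
          rw [show k - 1 + 1 = k by ring] at h1
          rw [ih (k - 1) (by omega) (by omega)] at h1
          apply mul_left_cancel₀ (hcast k hk)
          push_cast at h1 ⊢
          linear_combination -h1
  have key' : ∀ k : ℤ, k ≠ 0 → lam l (k • s) = lam l ((1 : ℤ) • s) := fun k hk =>
    key k.natAbs k hk (by omega)
  -- lam s s = C 1
  have e11 := lemStar (lam := lam) hsymm h93 s l hs hd 1 1 one_ne_zero one_ne_zero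
  simp only [one_smul] at e11
  have hss : lam s s = lam l ((1 : ℤ) • s) := by
    rw [one_smul]
    push_cast at e11
    linear_combination e11 / 2
  have hgen : ∀ j p : ℤ, j ≠ 0 → p ≠ 0 → j + p ≠ 0 → lam (j • s) (p • s) = lam s s := by
    intro j p hj hp hjp
    have e := lemStar (lam := lam) hsymm h93 s l hs hd j p hj hp
    rw [key' j hj, key' p hp] at e
    have hjp' : ((j : ℂ) + p) ≠ 0 := by
      have := hcast (j + p) hjp; push_cast at this; exact this
    apply mul_left_cancel₀ hjp'
    linear_combination e - ((j : ℂ) + p) * hss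
  exact ⟨fun j hj => hgen j j hj hj (by omega), hgen⟩
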